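/- Let D(n,k) denote the number of noncrossing arc diagrams with n arcs having exactly k blocks (arcs at the boundary of the unbounded region, i.e., outermost arcs). Then D(n,k) = T(n, n-k) for all 0 \le k \le n, where T is the Catalan triangle; in particular D(n,k) satisfies D(n,k) = \sum_{j=k-1}^{n-1} D(n-1,j) for n \ge 1, k \ge 1. -/

import Mathlib

/-- `D` is a noncrossing arc diagram with `n` arcs: a set of arcs `(i, j)` with `i < j < 2n`
such that every point `p < 2n` is an endpoint of exactly one arc, and no two arcs cross. -/
def IsArcDiagram (n : ℕ) (D : Finset (ℕ × ℕ)) : Prop :=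
  (∀ a ∈ D, a.1 < a.2 ∧ a.2 < 2 * n) ∧
  (∀ p : ℕ, p < 2 * n → ∃! a, a ∈ D ∧ (p = a.1 ∨ p = a.2)) ∧
  (∀ a ∈ D, ∀ b ∈ D, ¬ (a.1 < b.1 ∧ b.1 < a.2 ∧ a.2 < b.2))

/-- The number of blocks of an arc diagram: the number of outermost arcs,
i.e. arcs not contained in the interior of any other arc. -/
def numBlocks (D : Finset (ℕ × ℕ)) : ℕ :=
  (D.filter fun a => ∀ b ∈ D, ¬ (b.1 < a.1 ∧ a.2 < b.2)).card

/-- `arcCount n k`: the number of noncrossing arc diagrams with `n` arcs and `k` blocks. -/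
noncomputable def arcCount (n k : ℕ) : ℕ :=
  Nat.card {D : Finset (ℕ × ℕ) // IsArcDiagram n D ∧ numBlocks D = k}

open Finset

namespace ArcAux

/-- The outermost arcs of a diagram. -/
def blocks (D : Finset (ℕ × ℕ)) : Finset (ℕ × ℕ) :=
  D.filter fun a => ∀ b ∈ D, ¬ (b.1 < a.1 ∧ a.2 < b.2)

theorem numBlocks_eq (D : Finset (ℕ × ℕ)) : numBlocks D = (blocks D).card := rfl

theorem endpoint_unique {n : ℕ} {D : Finset (ℕ × ℕ)} (h : IsArcDiagram n D)
    {a b : ℕ × ℕ} (ha : a ∈ D) (hb : b ∈ D)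
    {p : ℕ} (hpa : p = a.1 ∨ p = a.2) (hpb : p = b.1 ∨ p = b.2) : a = b := by
  obtain ⟨h1, h2, _⟩ := h
  have hp : p < 2 * n := by
    have := h1 a ha
    rcases hpa with rfl | rfl
    · omega
    · omega
  obtain ⟨c, _, hu⟩ := h2 p hp
  rw [hu a ⟨ha, hpa⟩, hu b ⟨hb, hpb⟩]

theorem card_of_diagram {n : ℕ} {D : Finset (ℕ × ℕ)} (h : IsArcDiagram n D) :
    D.card = n := by
  obtain ⟨h1, h2, _⟩ := h
  have key : Finset.range (2 * n) = D.biUnion (fun a => {a.1, a.2}) := by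
    ext p
    simp only [mem_range, mem_biUnion, mem_insert, mem_singleton]
    constructor
    · intro hp
      obtain ⟨a, ⟨haD, hpa⟩, _⟩ := h2 p hp
      exact ⟨a, haD, by tauto⟩
    · rintro ⟨a, haD, hpa⟩
      have := h1 a haD
      omega
  have hdisj : ∀ a ∈ D, ∀ b ∈ D, a ≠ b →
      Disjoint ({a.1, a.2} : Finset ℕ) {b.1, b.2} := by
    intro a ha b hb hab
    rw [Finset.disjoint_left]
    intro p hpa hpb
    simp only [mem_insert, mem_singleton] at hpa hpb
    exact hab (endpoint_unique ⟨h1, h2, by tauto⟩ ha hb hpa hpb)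
  have hcard : (D.biUnion (fun a => {a.1, a.2})).card = ∑ a ∈ D, ({a.1, a.2} : Finset ℕ).card :=
    Finset.card_biUnion hdisj
  have h2' : ∀ a ∈ D, ({a.1, a.2} : Finset ℕ).card = 2 := by
    intro a ha
    have := (h1 a ha).1
    rw [Finset.card_insert_of_notMem (by simp; omega), Finset.card_singleton]
  rw [Finset.sum_congr rfl h2', Finset.sum_const, smul_eq_mul] at hcard
  have hr : (Finset.range (2*n)).card = 2 * n := Finset.card_range (2 * n)
  rw [key, hcard] at hr
  omega


/-! ### Shift maps -/

def pdown (s x : ℕ) : ℕ := if x < s then x else x - 1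
def pup (s x : ℕ) : ℕ := if x < s then x else x + 1
def mdown (s : ℕ) (a : ℕ × ℕ) : ℕ × ℕ := (pdown s a.1, pdown s a.2)
def mup (s : ℕ) (a : ℕ × ℕ) : ℕ × ℕ := (pup s a.1, pup s a.2)

theorem pup_lt_pup {s x y : ℕ} : pup s x < pup s y ↔ x < y := by
  unfold pup; split_ifs <;> omega

theorem pup_ne (s x : ℕ) : pup s x ≠ s := by unfold pup; split_ifs <;> omega

theorem pdown_pup (s x : ℕ) : pdown s (pup s x) = x := by
  unfold pup pdown; split_ifs <;> omega

theorem pup_pdown {s x : ℕ} (hx : x ≠ s) : pup s (pdown s x) = x := by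
  unfold pup pdown; split_ifs <;> omega

theorem pdown_lt_pdown {s x y : ℕ} (hx : x ≠ s) (hy : y ≠ s) (hxy : x < y) :
    pdown s x < pdown s y := by
  unfold pdown; split_ifs <;> omega

theorem mdown_mup (s : ℕ) (a : ℕ × ℕ) : mdown s (mup s a) = a := by
  simp [mdown, mup, pdown_pup]

theorem mup_mdown {s : ℕ} {a : ℕ × ℕ} (h1 : a.1 ≠ s) (h2 : a.2 ≠ s) :
    mup s (mdown s a) = a := by
  simp [mdown, mup, pup_pdown h1, pup_pdown h2]

theorem mup_injective (s : ℕ) : Function.Injective (mup s) := by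
  intro a b hab
  simp only [mup, Prod.mk.injEq] at hab
  have h1 : a.1 = b.1 := by have := hab.1; unfold pup at this; split_ifs at this <;> omega
  have h2 : a.2 = b.2 := by have := hab.2; unfold pup at this; split_ifs at this <;> omega
  exact Prod.ext h1 h2

/-! ### The last arc -/

noncomputable def lastLep (n : ℕ) (D : Finset (ℕ × ℕ)) : ℕ :=
  (D.filter fun a => a.2 = 2 * n - 1).sup Prod.fst

theorem last_arc {n : ℕ} {D : Finset (ℕ × ℕ)} (hn : 1 ≤ n) (h : IsArcDiagram n D) :
    (lastLep n D, 2 * n - 1) ∈ D ∧ lastLep n D < 2 * n - 1 ∧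
      ∀ a ∈ D, ((2:ℕ) * n - 1 = a.1 ∨ 2 * n - 1 = a.2) → a = (lastLep n D, 2 * n - 1) := by
  obtain ⟨h1, h2, h3⟩ := h
  have hp : 2 * n - 1 < 2 * n := by omega
  obtain ⟨a, ⟨haD, hpa⟩, _⟩ := h2 (2 * n - 1) hp
  have ha1 := h1 a haD
  have ha2 : a.2 = 2 * n - 1 := by omega
  have huniq : ∀ b ∈ D, ((2:ℕ) * n - 1 = b.1 ∨ 2 * n - 1 = b.2) → b = a := by
    intro b hb hpb
    exact endpoint_unique ⟨h1, h2, h3⟩ hb haD hpb hpa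
  have hfilt : (D.filter fun b => b.2 = 2 * n - 1) = {a} := by
    ext b
    simp only [mem_filter, mem_singleton]
    constructor
    · rintro ⟨hb, hb2⟩; exact huniq b hb (Or.inr hb2.symm)
    · rintro rfl; exact ⟨haD, ha2⟩
  have hsup : lastLep n D = a.1 := by
    rw [lastLep, hfilt, Finset.sup_singleton]
  have haa : a = (lastLep n D, 2 * n - 1) := by
    rw [hsup, ← ha2]
  constructor
  · rw [← haa]; exact haD
  constructor
  · rw [hsup]; omega
  · intro b hb hpb; rw [← haa]; exact huniq b hb hpb

/-- Every arc other than the last one lies entirely left of `s` or entirely inside `(s, 2n-1)`. -/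
theorem side_lemma {n : ℕ} {D : Finset (ℕ × ℕ)} (hn : 1 ≤ n) (h : IsArcDiagram n D)
    {a : ℕ × ℕ} (ha : a ∈ D.erase (lastLep n D, 2 * n - 1)) :
    (a.1 < lastLep n D ∧ a.2 < lastLep n D) ∨
      (lastLep n D < a.1 ∧ a.2 < 2 * n - 1) := by
  obtain ⟨hL, hLlt, hLu⟩ := last_arc hn h
  set s := lastLep n D with hs
  have hane := Finset.ne_of_mem_erase ha
  have haD := Finset.mem_of_mem_erase ha
  have hb := h.1 a haD
  have ha1s : a.1 ≠ s := fun hh =>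
    hane (endpoint_unique h haD hL (Or.inl hh.symm) (Or.inl rfl))
  have ha2s : a.2 ≠ s := fun hh =>
    hane (endpoint_unique h haD hL (Or.inr hh.symm) (Or.inl rfl))
  have ha2N : a.2 ≠ 2 * n - 1 := fun hh =>
    hane (endpoint_unique h haD hL (Or.inr hh.symm) (Or.inr rfl))
  have hnc := h.2.2 a haD (s, 2 * n - 1) hL
  simp only at hnc
  omega

/-! ### Removing the last arc -/

def remArc (s N : ℕ) (D : Finset (ℕ × ℕ)) : Finset (ℕ × ℕ) :=
  (D.erase (s, N - 1)).image (mdown s)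

def addArc (s N : ℕ) (E : Finset (ℕ × ℕ)) : Finset (ℕ × ℕ) :=
  insert (s, N - 1) (E.image (mup s))

theorem erase_endpoints {n : ℕ} {D : Finset (ℕ × ℕ)} (hn : 1 ≤ n) (h : IsArcDiagram n D)
    {a : ℕ × ℕ} (ha : a ∈ D.erase (lastLep n D, 2 * n - 1)) :
    a.1 ≠ lastLep n D ∧ a.2 ≠ lastLep n D ∧ a.2 < 2 * n - 1 ∧ a.1 < a.2 := by
  have hside := side_lemma hn h ha
  have hb := h.1 a (mem_of_mem_erase ha)
  have := (last_arc hn h).2.1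
  omega

theorem remArc_diagram {n : ℕ} {D : Finset (ℕ × ℕ)} (hn : 1 ≤ n) (h : IsArcDiagram n D) :
    IsArcDiagram (n - 1) (remArc (lastLep n D) (2 * n) D) := by
  set s := lastLep n D with hs
  have hN1 : 2 * n - 1 - 1 + 1 = 2 * n - 1 := by omega
  refine ⟨?_, ?_, ?_⟩
  · rintro a' ha'
    simp only [remArc, mem_image] at ha'
    obtain ⟨a, ha, rfl⟩ := ha'
    have he := erase_endpoints hn h ha
    have hside := side_lemma hn h ha
    have hLlt := (last_arc hn h).2.1
    refine ⟨?_, ?_⟩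
    · simp only [mdown]; unfold pdown; split_ifs <;> omega
    · simp only [mdown]; unfold pdown; split_ifs <;> omega
  · intro p hp
    have hx1 : pup s p < 2 * n := by unfold pup; split_ifs <;> omega
    have hx2 : pup s p ≠ 2 * n - 1 := by unfold pup; split_ifs <;> omega
    obtain ⟨a, ⟨haD, hpa⟩, hau⟩ := h.2.1 (pup s p) hx1
    have haerase : a ∈ D.erase (s, 2 * n - 1) := by
      rw [Finset.mem_erase]
      refine ⟨?_, haD⟩
      rintro rfl
      simp only at hpa
      rcases hpa with hh | hh
      · exact pup_ne s p hh
      · exact hx2 hh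
    refine ⟨mdown s a, ⟨?_, ?_⟩, ?_⟩
    · exact Finset.mem_image_of_mem _ haerase
    · rcases hpa with hh | hh
      · left; simp only [mdown, ← hh, pdown_pup]
      · right; simp only [mdown, ← hh, pdown_pup]
    · rintro b' ⟨hb', hpb'⟩
      simp only [remArc, mem_image] at hb'
      obtain ⟨b, hb, rfl⟩ := hb'
      have heb := erase_endpoints hn h hb
      have hbx : pup s p = b.1 ∨ pup s p = b.2 := by
        rcases hpb' with hh | hh
        · left; rw [hh]; simp only [mdown]; rw [pup_pdown heb.1]
        · right; rw [hh]; simp only [mdown]; rw [pup_pdown heb.2.1]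
      rw [hau b ⟨mem_of_mem_erase hb, hbx⟩]
  · rintro a' ha' b' hb' ⟨hc1, hc2, hc3⟩
    simp only [remArc, mem_image] at ha' hb'
    obtain ⟨a, ha, rfl⟩ := ha'
    obtain ⟨b, hb, rfl⟩ := hb'
    have hea := erase_endpoints hn h ha
    have heb := erase_endpoints hn h hb
    simp only [mdown] at hc1 hc2 hc3
    have k1 : a.1 < b.1 := by
      rw [← pup_pdown hea.1, ← pup_pdown heb.1]; exact pup_lt_pup.2 hc1
    have k2 : b.1 < a.2 := by
      rw [← pup_pdown heb.1, ← pup_pdown hea.2.1]; exact pup_lt_pup.2 hc2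
    have k3 : a.2 < b.2 := by
      rw [← pup_pdown hea.2.1, ← pup_pdown heb.2.1]; exact pup_lt_pup.2 hc3
    exact h.2.2 a (mem_of_mem_erase ha) b (mem_of_mem_erase hb) ⟨k1, k2, k3⟩

theorem mdown_injOn {n : ℕ} {D : Finset (ℕ × ℕ)} (hn : 1 ≤ n) (h : IsArcDiagram n D) :
    Set.InjOn (mdown (lastLep n D)) (D.erase (lastLep n D, 2 * n - 1)) := by
  intro a ha b hb hab
  have hea := erase_endpoints hn h ha
  have heb := erase_endpoints hn h hb
  rw [← mup_mdown hea.1 hea.2.1, ← mup_mdown heb.1 heb.2.1, hab]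

theorem remArc_card {n : ℕ} {D : Finset (ℕ × ℕ)} (hn : 1 ≤ n) (h : IsArcDiagram n D) :
    (remArc (lastLep n D) (2 * n) D).card = n - 1 := by
  rw [remArc, Finset.card_image_of_injOn (mdown_injOn hn h),
    Finset.card_erase_of_mem (last_arc hn h).1, card_of_diagram h]

theorem addArc_remArc {n : ℕ} {D : Finset (ℕ × ℕ)} (hn : 1 ≤ n) (h : IsArcDiagram n D) :
    addArc (lastLep n D) (2 * n) (remArc (lastLep n D) (2 * n) D) = D := by
  rw [addArc, remArc, Finset.image_image]
  have himg : (D.erase (lastLep n D, 2 * n - 1)).image (mup (lastLep n D) ∘ mdown (lastLep n D))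
      = D.erase (lastLep n D, 2 * n - 1) := by
    rw [Finset.image_congr (g := id), Finset.image_id]
    intro a ha
    have hea := erase_endpoints hn h ha
    exact mup_mdown hea.1 hea.2.1
  rw [himg, Finset.insert_erase (last_arc hn h).1]

/-! ### Adding an arc -/

theorem addArc_diagram {n : ℕ} {E : Finset (ℕ × ℕ)} {s : ℕ} (hn : 1 ≤ n)
    (hE : IsArcDiagram (n - 1) E)
    (hs : s = 2 * n - 2 ∨ ∃ c ∈ blocks E, c.1 = s) :
    IsArcDiagram n (addArc s (2 * n) E) := by
  have hEb : ∀ c ∈ E, c.1 < c.2 ∧ c.2 < 2 * n - 2 := by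
    intro c hc; have := hE.1 c hc; omega
  have hsle : s ≤ 2 * n - 2 := by
    rcases hs with rfl | ⟨c, hc, rfl⟩
    · omega
    · have := hEb c (Finset.mem_of_mem_filter c hc); omega
  have hup_lt : ∀ c ∈ E, pup s c.1 < 2 * n - 1 ∧ pup s c.2 < 2 * n - 1 := by
    intro c hc
    have := hEb c hc
    constructor <;> (unfold pup; split_ifs <;> omega)
  refine ⟨?_, ?_, ?_⟩
  · intro a ha
    rcases Finset.mem_insert.1 ha with rfl | ha'
    · simp only; omega
    · obtain ⟨c, hc, rfl⟩ := Finset.mem_image.1 ha'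
      have h1 := hup_lt c hc
      have h2 := (hEb c hc).1
      exact ⟨by simp only [mup]; exact pup_lt_pup.2 h2, by simp only [mup]; omega⟩
  · intro p hp
    by_cases hps : p = s ∨ p = 2 * n - 1
    · refine ⟨(s, 2 * n - 1), ⟨Finset.mem_insert_self _ _, by simp only; omega⟩, ?_⟩
      rintro b ⟨hb, hpb⟩
      rcases Finset.mem_insert.1 hb with rfl | hb'
      · rfl
      · obtain ⟨c, hc, rfl⟩ := Finset.mem_image.1 hb'
        exfalso
        have h1 := hup_lt c hc
        have h2 : pup s c.1 ≠ s := pup_ne s c.1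
        have h3 : pup s c.2 ≠ s := pup_ne s c.2
        simp only [mup] at hpb
        omega
    · push_neg at hps
      have hq : pdown s p < 2 * (n - 1) := by unfold pdown; split_ifs <;> omega
      obtain ⟨c, ⟨hcE, hpc⟩, hcu⟩ := hE.2.1 (pdown s p) hq
      have hpup : pup s (pdown s p) = p := pup_pdown hps.1
      refine ⟨mup s c, ⟨Finset.mem_insert_of_mem (Finset.mem_image_of_mem _ hcE), ?_⟩, ?_⟩
      · rcases hpc with hh | hh
        · left; simp only [mup, ← hh, hpup]
        · right; simp only [mup, ← hh, hpup]
      · rintro b ⟨hb, hpb⟩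
        rcases Finset.mem_insert.1 hb with rfl | hb'
        · exfalso; simp only at hpb; omega
        · obtain ⟨c', hc', rfl⟩ := Finset.mem_image.1 hb'
          have : pdown s p = c'.1 ∨ pdown s p = c'.2 := by
            rcases hpb with hh | hh
            · left; simp only [mup] at hh; rw [hh, pdown_pup]
            · right; simp only [mup] at hh; rw [hh, pdown_pup]
          rw [hcu c' ⟨hc', this⟩]
  · rintro a ha b hb ⟨k1, k2, k3⟩
    rcases Finset.mem_insert.1 ha with rfl | ha' <;>
      rcases Finset.mem_insert.1 hb with rfl | hb'
    · exact absurd k1 (lt_irrefl _)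
    · obtain ⟨c, hc, rfl⟩ := Finset.mem_image.1 hb'
      have h1 := hup_lt c hc
      simp only [mup] at k1 k2 k3
      omega
    · -- b = (s, 2n-1), a = mup c : crossing at s
      obtain ⟨c, hc, rfl⟩ := Finset.mem_image.1 ha'
      simp only [mup] at k1 k2 k3
      have hc1 : c.1 < s := by
        by_contra hcon
        have : pup s c.1 = c.1 + 1 := by unfold pup; split_ifs <;> omega
        omega
      have hc2 : s ≤ c.2 := by
        by_contra hcon
        have : pup s c.2 = c.2 := by unfold pup; split_ifs <;> omega
        omega
      rcases hs with rfl | ⟨d, hd, hds⟩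
      · have := hEb c hc; omega
      · have hdE := Finset.mem_of_mem_filter d hd
        have hcd : c ≠ d := by intro hh; rw [hh] at hc1; omega
        have hc2d1 : c.2 ≠ d.1 := by
          intro hh
          exact hcd (endpoint_unique hE hc hdE (Or.inr hh.symm) (Or.inl rfl))
        have hc2d2 : c.2 ≠ d.2 := by
          intro hh
          exact hcd (endpoint_unique hE hc hdE (Or.inr hh.symm) (Or.inr rfl))
        have hnc := hE.2.2 c hc d hdE
        have hdb := (Finset.mem_filter.1 hd).2 c hc
        have h5 : d.1 < c.2 := by omega
        have h6 : d.2 ≤ c.2 := by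
          by_contra hlt
          exact hnc ⟨by omega, h5, by omega⟩
        exact hdb ⟨by omega, by omega⟩
    · obtain ⟨c, hc, rfl⟩ := Finset.mem_image.1 ha'
      obtain ⟨c', hc', rfl⟩ := Finset.mem_image.1 hb'
      simp only [mup] at k1 k2 k3
      exact hE.2.2 c hc c' hc' ⟨pup_lt_pup.1 k1, pup_lt_pup.1 k2, pup_lt_pup.1 k3⟩

def phi (E : Finset (ℕ × ℕ)) (s : ℕ) : ℕ :=
  ((blocks E).filter fun c => c.1 < s).card

theorem blocks_addArc {n : ℕ} {E : Finset (ℕ × ℕ)} {s : ℕ} (hn : 1 ≤ n)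
    (hE : IsArcDiagram (n - 1) E)
    (hs : s = 2 * n - 2 ∨ ∃ c ∈ blocks E, c.1 = s) :
    blocks (addArc s (2 * n) E)
      = insert (s, 2 * n - 1) (((blocks E).filter fun c => c.1 < s).image (mup s)) := by
  have hEb : ∀ c ∈ E, c.1 < c.2 ∧ c.2 < 2 * n - 2 := by
    intro c hc; have := hE.1 c hc; omega
  have hup_lt : ∀ c ∈ E, pup s c.2 < 2 * n - 1 := by
    intro c hc; have := hEb c hc; unfold pup; split_ifs <;> omega
  ext x
  rw [blocks, Finset.mem_filter, Finset.mem_insert]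
  constructor
  · rintro ⟨hx, hbx⟩
    rcases Finset.mem_insert.1 hx with rfl | hx'
    · left; rfl
    · obtain ⟨c, hc, rfl⟩ := Finset.mem_image.1 hx'
      right
      have hc1 : c.1 < s := by
        by_contra hcon
        have h1 : s < pup s c.1 := by unfold pup; split_ifs <;> omega
        have h2 := hup_lt c hc
        exact hbx (s, 2 * n - 1) (Finset.mem_insert_self _ _) ⟨h1, by simp only [mup]; omega⟩
      have hcb : c ∈ blocks E := by
        rw [blocks, Finset.mem_filter]
        refine ⟨hc, fun b hb hcov => ?_⟩
        refine hbx (mup s b) (Finset.mem_insert_of_mem (Finset.mem_image_of_mem _ hb))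
          ⟨?_, ?_⟩
        · simp only [mup]; exact pup_lt_pup.2 hcov.1
        · simp only [mup]; exact pup_lt_pup.2 hcov.2
      exact Finset.mem_image_of_mem _ (Finset.mem_filter.2 ⟨hcb, hc1⟩)
  · intro hx
    rcases hx with rfl | hx'
    · refine ⟨Finset.mem_insert_self _ _, fun b hb hcov => ?_⟩
      rcases Finset.mem_insert.1 hb with rfl | hb'
      · exact absurd hcov.1 (lt_irrefl _)
      · obtain ⟨c, hc, rfl⟩ := Finset.mem_image.1 hb'
        have := hup_lt c hc
        have h2 : ((s, 2 * n - 1) : ℕ × ℕ).2 < (mup s c).2 := hcov.2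
        simp only [mup] at h2
        omega
    · obtain ⟨c, hc, rfl⟩ := Finset.mem_image.1 hx'
      obtain ⟨hcb, hc1⟩ := Finset.mem_filter.1 hc
      have hcE := Finset.mem_of_mem_filter c hcb
      refine ⟨Finset.mem_insert_of_mem (Finset.mem_image_of_mem _ hcE), fun b hb hcov => ?_⟩
      rcases Finset.mem_insert.1 hb with rfl | hb'
      · have h1 : ((s, 2 * n - 1) : ℕ × ℕ).1 < (mup s c).1 := hcov.1
        have h2 : pup s c.1 = c.1 := by unfold pup; split_ifs <;> omega
        simp only [mup] at h1
        omega
      · obtain ⟨c', hc', rfl⟩ := Finset.mem_image.1 hb'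
        simp only [mup] at hcov
        exact (Finset.mem_filter.1 hcb).2 c' hc' ⟨pup_lt_pup.1 hcov.1, pup_lt_pup.1 hcov.2⟩

theorem numBlocks_addArc {n : ℕ} {E : Finset (ℕ × ℕ)} {s : ℕ} (hn : 1 ≤ n)
    (hE : IsArcDiagram (n - 1) E)
    (hs : s = 2 * n - 2 ∨ ∃ c ∈ blocks E, c.1 = s) :
    numBlocks (addArc s (2 * n) E) = phi E s + 1 := by
  have hEb : ∀ c ∈ E, c.1 < c.2 ∧ c.2 < 2 * n - 2 := by
    intro c hc; have := hE.1 c hc; omega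
  rw [numBlocks_eq, blocks_addArc hn hE hs]
  rw [Finset.card_insert_of_notMem, Finset.card_image_of_injective _ (mup_injective s)]
  · rfl
  · intro hmem
    obtain ⟨c, hc, hceq⟩ := Finset.mem_image.1 hmem
    have hcE := Finset.mem_of_mem_filter c (Finset.mem_of_mem_filter c hc)
    have := hEb c hcE
    have h2 : (mup s c).2 = 2 * n - 1 := by rw [hceq]
    simp only [mup] at h2
    unfold pup at h2
    split_ifs at h2 <;> omega

theorem lastLep_addArc {n : ℕ} {E : Finset (ℕ × ℕ)} {s : ℕ} (hn : 1 ≤ n)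
    (hE : IsArcDiagram (n - 1) E) :
    lastLep n (addArc s (2 * n) E) = s := by
  have hEb : ∀ c ∈ E, c.1 < c.2 ∧ c.2 < 2 * n - 2 := by
    intro c hc; have := hE.1 c hc; omega
  have hfilt : ((addArc s (2 * n) E).filter fun a => a.2 = 2 * n - 1) = {(s, 2 * n - 1)} := by
    ext b
    simp only [Finset.mem_filter, Finset.mem_singleton, addArc, Finset.mem_insert]
    constructor
    · rintro ⟨rfl | hb', h2⟩
      · rfl
      · exfalso
        obtain ⟨c, hc, rfl⟩ := Finset.mem_image.1 hb'
        have := hEb c hc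
        simp only [mup] at h2
        unfold pup at h2
        split_ifs at h2 <;> omega
    · rintro rfl
      exact ⟨Or.inl rfl, rfl⟩
  rw [lastLep, hfilt, Finset.sup_singleton]

theorem remArc_addArc {n : ℕ} {E : Finset (ℕ × ℕ)} {s : ℕ} (hn : 1 ≤ n)
    (hE : IsArcDiagram (n - 1) E) :
    remArc s (2 * n) (addArc s (2 * n) E) = E := by
  have hEb : ∀ c ∈ E, c.1 < c.2 ∧ c.2 < 2 * n - 2 := by
    intro c hc; have := hE.1 c hc; omega
  have hnotmem : (s, 2 * n - 1) ∉ E.image (mup s) := by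
    intro hmem
    obtain ⟨c, hc, hceq⟩ := Finset.mem_image.1 hmem
    have := hEb c hc
    have h2 : (mup s c).2 = 2 * n - 1 := by rw [hceq]
    simp only [mup] at h2
    unfold pup at h2
    split_ifs at h2 <;> omega
  rw [remArc, addArc, Finset.erase_insert hnotmem, Finset.image_image]
  rw [Finset.image_congr (g := id), Finset.image_id]
  intro a _
  exact mdown_mup s a

theorem lastLep_valid {n : ℕ} {D : Finset (ℕ × ℕ)} (hn : 1 ≤ n) (h : IsArcDiagram n D) :
    lastLep n D = 2 * n - 2 ∨
      ∃ c ∈ blocks (remArc (lastLep n D) (2 * n) D), c.1 = lastLep n D := by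
  set s := lastLep n D with hsdef
  have hLlt := (last_arc hn h).2.1
  by_cases hcase : s = 2 * n - 2
  · exact Or.inl hcase
  · right
    have hslt : s < 2 * n - 2 := by omega
    obtain ⟨a, ⟨haD, hpa⟩, _⟩ := h.2.1 (s + 1) (by omega)
    have haerase : a ∈ D.erase (s, 2 * n - 1) := by
      rw [Finset.mem_erase]
      refine ⟨fun hh => ?_, haD⟩
      rw [hh] at hpa
      simp only at hpa
      omega
    have hside := side_lemma hn h haerase
    have ha1 : a.1 = s + 1 := by
      have hb := h.1 a haD
      omega
    refine ⟨mdown s a, ?_, ?_⟩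
    · rw [blocks, Finset.mem_filter]
      refine ⟨Finset.mem_image_of_mem _ haerase, ?_⟩
      rintro b' hb' ⟨hcov1, hcov2⟩
      obtain ⟨b, hb, rfl⟩ := Finset.mem_image.1 hb'
      have heb := erase_endpoints hn h hb
      have hsideb := side_lemma hn h hb
      have hma1 : (mdown s a).1 = s := by
        simp only [mdown, ha1]; unfold pdown; split_ifs <;> omega
      rw [hma1] at hcov1
      have hb1lt : b.1 < s := by
        simp only [mdown] at hcov1
        unfold pdown at hcov1
        split_ifs at hcov1 <;> omega
      have hb2lt : b.2 < s := by omega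
      have haa := h.1 a haD
      have hma2 : (mdown s a).2 = a.2 - 1 := by
        simp only [mdown]; unfold pdown; split_ifs <;> omega
      have hmb2 : (mdown s b).2 = b.2 := by
        simp only [mdown]; unfold pdown; split_ifs <;> omega
      rw [hma2, hmb2] at hcov2
      have := h.1 a haD
      omega
    · simp only [mdown, ha1]; unfold pdown; split_ifs <;> omega

theorem numBlocks_eq_phi {n : ℕ} {D : Finset (ℕ × ℕ)} (hn : 1 ≤ n) (h : IsArcDiagram n D) :
    numBlocks D = phi (remArc (lastLep n D) (2 * n) D) (lastLep n D) + 1 := by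
  conv_lhs => rw [← addArc_remArc hn h]
  exact numBlocks_addArc hn (remArc_diagram hn h) (lastLep_valid hn h)

/-! ### Selecting the cut point -/

def Sset (M : ℕ) (E : Finset (ℕ × ℕ)) : Finset ℕ :=
  insert M ((blocks E).image Prod.fst)

theorem mem_Sset_iff {M : ℕ} {E : Finset (ℕ × ℕ)} {s : ℕ} :
    s ∈ Sset M E ↔ (s = M ∨ ∃ c ∈ blocks E, c.1 = s) := by
  simp [Sset]

theorem sel_exists_unique {n : ℕ} {E : Finset (ℕ × ℕ)} (hn : 1 ≤ n)
    (hE : IsArcDiagram (n - 1) E) {m : ℕ} (hm : m ≤ numBlocks E) :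
    ∃ s₀, ((Sset (2 * n - 2) E).filter fun s => phi E s = m) = {s₀} := by
  have hEb : ∀ c ∈ E, c.1 < c.2 ∧ c.2 < 2 * n - 2 := by
    intro c hc; have := hE.1 c hc; omega
  set M := 2 * n - 2 with hM
  set B := (blocks E).image Prod.fst with hB
  have hBlt : ∀ t ∈ B, t < M := by
    intro t ht
    obtain ⟨c, hc, rfl⟩ := Finset.mem_image.1 ht
    have := hEb c (Finset.mem_of_mem_filter c hc)
    omega
  have hMnot : M ∉ B := fun hmem => lt_irrefl M (hBlt M hmem)
  have hfst_inj : Set.InjOn Prod.fst ((blocks E : Finset (ℕ × ℕ)) : Set (ℕ × ℕ)) := by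
    intro c hc d hd hcd
    exact endpoint_unique hE (Finset.mem_of_mem_filter c (Finset.mem_coe.1 hc))
      (Finset.mem_of_mem_filter d (Finset.mem_coe.1 hd)) (Or.inl rfl) (Or.inl hcd)
  have hcardB : B.card = numBlocks E := by
    rw [hB, Finset.card_image_of_injOn hfst_inj, numBlocks_eq]
  have hcardS : (Sset M E).card = numBlocks E + 1 := by
    rw [Sset, Finset.card_insert_of_notMem hMnot, hcardB]
  have hmono : ∀ s₁ ∈ Sset M E, ∀ s₂ ∈ Sset M E, s₁ < s₂ → phi E s₁ < phi E s₂ := by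
    intro s₁ h₁ s₂ h₂ hlt
    have hs₁B : s₁ ∈ B := by
      rcases Finset.mem_insert.1 h₁ with rfl | h
      · exfalso
        rcases Finset.mem_insert.1 h₂ with rfl | h
        · omega
        · have := hBlt _ h; omega
      · exact h
    obtain ⟨c, hc, rfl⟩ := Finset.mem_image.1 hs₁B
    refine Finset.card_lt_card ((Finset.ssubset_iff_of_subset
      (Finset.monotone_filter_right _ (fun x _ hx => lt_trans hx hlt))).2 ⟨c, ?_, ?_⟩)
    · exact Finset.mem_filter.2 ⟨hc, hlt⟩
    · intro hmem
      exact lt_irrefl _ ((Finset.mem_filter.1 hmem).2)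
  have hphile : ∀ s ∈ Sset M E, phi E s ≤ numBlocks E := by
    intro s _
    rw [numBlocks_eq]
    exact Finset.card_filter_le _ _
  have hinj : ∀ s₁ ∈ Sset M E, ∀ s₂ ∈ Sset M E, phi E s₁ = phi E s₂ → s₁ = s₂ := by
    intro s₁ h₁ s₂ h₂ heq
    rcases lt_trichotomy s₁ s₂ with h | h | h
    · exact absurd heq (ne_of_lt (hmono _ h₁ _ h₂ h))
    · exact h
    · exact absurd heq.symm (ne_of_lt (hmono _ h₂ _ h₁ h))
  have hsurj := Finset.surj_on_of_inj_on_of_card_le (s := Sset M E)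
    (t := Finset.range (numBlocks E + 1)) (f := fun s _ => phi E s)
    (fun s hs => Finset.mem_range.2 (Nat.lt_succ_of_le (hphile s hs)))
    (fun a₁ a₂ ha₁ ha₂ he => hinj _ ha₁ _ ha₂ he)
    (by rw [hcardS, Finset.card_range])
  obtain ⟨s₀, hs₀S, hs₀⟩ := hsurj m (Finset.mem_range.2 (Nat.lt_succ_of_le hm))
  refine ⟨s₀, ?_⟩
  ext t
  simp only [Finset.mem_filter, Finset.mem_singleton]
  constructor
  · rintro ⟨htS, hphit⟩
    exact hinj _ htS _ hs₀S (by rw [hphit, hs₀])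
  · rintro rfl
    exact ⟨hs₀S, hs₀.symm⟩

def sel (M : ℕ) (E : Finset (ℕ × ℕ)) (m : ℕ) : ℕ :=
  ((Sset M E).filter fun s => phi E s = m).sup id

theorem sel_spec {n : ℕ} {E : Finset (ℕ × ℕ)} (hn : 1 ≤ n)
    (hE : IsArcDiagram (n - 1) E) {m : ℕ} (hm : m ≤ numBlocks E) :
    sel (2 * n - 2) E m ∈ Sset (2 * n - 2) E ∧ phi E (sel (2 * n - 2) E m) = m ∧
      ∀ s ∈ Sset (2 * n - 2) E, phi E s = m → s = sel (2 * n - 2) E m := by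
  obtain ⟨s₀, h0⟩ := sel_exists_unique hn hE hm
  have hsel : sel (2 * n - 2) E m = s₀ := by
    rw [sel, h0, Finset.sup_singleton]
    rfl
  have hs₀mem : s₀ ∈ (Sset (2 * n - 2) E).filter fun s => phi E s = m := by
    rw [h0]; exact Finset.mem_singleton_self s₀
  obtain ⟨hs₀S, hs₀phi⟩ := Finset.mem_filter.1 hs₀mem
  refine ⟨hsel ▸ hs₀S, hsel ▸ hs₀phi, ?_⟩
  intro t htS htphi
  have : t ∈ (Sset (2 * n - 2) E).filter fun s => phi E s = m :=
    Finset.mem_filter.2 ⟨htS, htphi⟩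
  rw [h0, Finset.mem_singleton] at this
  rw [this, hsel]

/-! ### Counting -/

noncomputable def AD (n k : ℕ) : Finset (Finset (ℕ × ℕ)) :=
  @Finset.filter _ (fun D => IsArcDiagram n D ∧ numBlocks D = k) (Classical.decPred _)
    (Finset.range (2 * n) ×ˢ Finset.range (2 * n)).powerset

theorem mem_AD {n k : ℕ} {D : Finset (ℕ × ℕ)} :
    D ∈ AD n k ↔ IsArcDiagram n D ∧ numBlocks D = k := by
  rw [AD, @Finset.mem_filter _ _ (Classical.decPred _) _ _, Finset.mem_powerset]
  constructor
  · tauto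
  · intro h
    refine ⟨?_, h⟩
    intro a ha
    have := h.1.1 a ha
    rw [Finset.mem_product, Finset.mem_range, Finset.mem_range]
    omega

theorem arcCount_eq_AD (n k : ℕ) : arcCount n k = (AD n k).card := by
  rw [arcCount, ← Nat.card_eq_finsetCard]
  exact Nat.card_congr (Equiv.subtypeEquivRight (fun D => mem_AD.symm))

theorem AD_zero : AD 0 0 = {∅} := by
  ext D
  rw [mem_AD, Finset.mem_singleton]
  constructor
  · rintro ⟨h, _⟩
    rw [Finset.eq_empty_iff_forall_notMem]
    intro a ha
    have := h.1 a ha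
    omega
  · rintro rfl
    refine ⟨⟨?_, ?_, ?_⟩, ?_⟩
    · intro a ha; exact absurd ha (Finset.notMem_empty a)
    · intro p hp; exact absurd hp (by omega)
    · intro a ha; exact absurd ha (Finset.notMem_empty a)
    · simp [numBlocks]

theorem arcCount_zero_zero : arcCount 0 0 = 1 := by
  rw [arcCount_eq_AD, AD_zero, Finset.card_singleton]

theorem arcCount_pos_zero {n : ℕ} (hn : 1 ≤ n) : arcCount n 0 = 0 := by
  rw [arcCount_eq_AD, Finset.card_eq_zero, Finset.eq_empty_iff_forall_notMem]
  intro D hD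
  obtain ⟨h, h0⟩ := mem_AD.1 hD
  have := numBlocks_eq_phi hn h
  omega

theorem AD_card_rec {n k : ℕ} (hn : 1 ≤ n) (hk : 1 ≤ k) :
    (AD n k).card = ∑ j ∈ Finset.Icc (k - 1) (n - 1), (AD (n - 1) j).card := by
  classical
  have hmap : ∀ D ∈ AD n k,
      numBlocks (remArc (lastLep n D) (2 * n) D) ∈ Finset.Icc (k - 1) (n - 1) := by
    intro D hD
    obtain ⟨h, hkD⟩ := mem_AD.1 hD
    have hphi := numBlocks_eq_phi hn h
    have h1 : phi (remArc (lastLep n D) (2 * n) D) (lastLep n D)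
        ≤ numBlocks (remArc (lastLep n D) (2 * n) D) := by
      rw [numBlocks_eq]
      exact Finset.card_filter_le _ _
    have h2 : numBlocks (remArc (lastLep n D) (2 * n) D) ≤ n - 1 := by
      have hb : (blocks (remArc (lastLep n D) (2 * n) D)).card
          ≤ (remArc (lastLep n D) (2 * n) D).card := Finset.card_filter_le _ _
      rw [remArc_card hn h] at hb
      rw [numBlocks_eq]
      exact hb
    rw [Finset.mem_Icc]
    omega
  rw [Finset.card_eq_sum_card_fiberwise hmap]
  refine Finset.sum_congr rfl ?_
  intro j hj
  obtain ⟨hj1, hj2⟩ := Finset.mem_Icc.1 hj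
  symm
  refine Finset.card_bij (fun E _ => addArc (sel (2 * n - 2) E (k - 1)) (2 * n) E)
    ?_ ?_ ?_
  · intro E hEmem
    obtain ⟨hE, hjE⟩ := mem_AD.1 hEmem
    have hm : k - 1 ≤ numBlocks E := by omega
    obtain ⟨hselS, hselphi, hseluniq⟩ := sel_spec hn hE hm
    have hvalid := mem_Sset_iff.1 hselS
    have hdiag := addArc_diagram hn hE hvalid
    have hnb : numBlocks (addArc (sel (2 * n - 2) E (k - 1)) (2 * n) E) = k := by
      rw [numBlocks_addArc hn hE hvalid, hselphi]
      exact Nat.succ_pred_eq_of_pos hk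
    refine Finset.mem_filter.2 ⟨mem_AD.2 ⟨hdiag, hnb⟩, ?_⟩
    rw [lastLep_addArc hn hE, remArc_addArc hn hE, hjE]
  · intro E₁ h₁ E₂ h₂ heq'
    have heq : addArc (sel (2 * n - 2) E₁ (k - 1)) (2 * n) E₁
        = addArc (sel (2 * n - 2) E₂ (k - 1)) (2 * n) E₂ := heq'
    have hE₁ := (mem_AD.1 h₁).1
    have hE₂ := (mem_AD.1 h₂).1
    have hs₁ := lastLep_addArc (s := sel (2 * n - 2) E₁ (k - 1)) hn hE₁
    have hs₂ := lastLep_addArc (s := sel (2 * n - 2) E₂ (k - 1)) hn hE₂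
    have hss : sel (2 * n - 2) E₁ (k - 1) = sel (2 * n - 2) E₂ (k - 1) := by
      rw [← hs₁, heq, hs₂]
    calc E₁ = remArc (sel (2 * n - 2) E₁ (k - 1)) (2 * n)
          (addArc (sel (2 * n - 2) E₁ (k - 1)) (2 * n) E₁) := (remArc_addArc hn hE₁).symm
      _ = E₂ := by rw [heq, hss, remArc_addArc hn hE₂]
  · intro D hD
    obtain ⟨hDAD, hgD⟩ := Finset.mem_filter.1 hD
    obtain ⟨h, hkD⟩ := mem_AD.1 hDAD
    have hE : IsArcDiagram (n - 1) (remArc (lastLep n D) (2 * n) D) := remArc_diagram hn h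
    have hmem : remArc (lastLep n D) (2 * n) D ∈ AD (n - 1) j := mem_AD.2 ⟨hE, hgD⟩
    have hphi := numBlocks_eq_phi hn h
    have hphiE : phi (remArc (lastLep n D) (2 * n) D) (lastLep n D) = k - 1 := by omega
    have hSD : lastLep n D ∈ Sset (2 * n - 2) (remArc (lastLep n D) (2 * n) D) :=
      mem_Sset_iff.2 (lastLep_valid hn h)
    have hm : k - 1 ≤ numBlocks (remArc (lastLep n D) (2 * n) D) := by
      rw [hgD]; omega
    obtain ⟨hselS, hselphi, hseluniq⟩ := sel_spec hn hE hm
    have hsel : lastLep n D = sel (2 * n - 2) (remArc (lastLep n D) (2 * n) D) (k - 1) :=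
      hseluniq _ hSD hphiE
    refine ⟨remArc (lastLep n D) (2 * n) D, hmem, ?_⟩
    show addArc (sel (2 * n - 2) (remArc (lastLep n D) (2 * n) D) (k - 1)) (2 * n)
      (remArc (lastLep n D) (2 * n) D) = D
    rw [← hsel]
    exact addArc_remArc hn h

theorem arcCount_rec {n k : ℕ} (hn : 1 ≤ n) (hk : 1 ≤ k) :
    arcCount n k = ∑ j ∈ Finset.Icc (k - 1) (n - 1), arcCount (n - 1) j := by
  rw [arcCount_eq_AD, AD_card_rec hn hk]
  exact Finset.sum_congr rfl (fun j _ => (arcCount_eq_AD _ _).symm)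

end ArcAux

theorem arcCount_eq_catalan_triangle
    (T : ℕ → ℕ → ℕ)
    (hT00 : T 0 0 = 1)
    (hT0 : ∀ n : ℕ, 0 < n → T n 0 = 1)
    (hTnn : ∀ n : ℕ, 0 < n → T n n = 0)
    (hrec : ∀ n k : ℕ, 1 < n → 0 < k → k < n → T n k = T n (k - 1) + T (n - 1) k) :
    ∀ n k : ℕ,
      (k ≤ n → arcCount n k = T n (n - k)) ∧
      (1 ≤ n → 1 ≤ k →
        arcCount n k = ∑ j ∈ Finset.Icc (k - 1) (n - 1), arcCount (n - 1) j) := by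
  have TS : ∀ N : ℕ, 1 ≤ N → ∀ r : ℕ, r < N → T N r = ∑ m ∈ Finset.range (r + 1), T (N - 1) m := by
    intro N hN r
    induction r with
    | zero =>
      intro _
      rw [Finset.sum_range_one, hT0 N hN]
      rcases Nat.eq_zero_or_pos (N - 1) with h0 | hpos
      · rw [h0, hT00]
      · rw [hT0 _ hpos]
    | succ r ihr =>
      intro hr
      rw [hrec N (r + 1) (by omega) (by omega) hr, Finset.sum_range_succ,
        ← ihr (by omega)]
      simp
  have part1 : ∀ n k : ℕ, k ≤ n → arcCount n k = T n (n - k) := by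
    intro n
    induction n with
    | zero =>
      intro k hk
      have hk0 : k = 0 := Nat.le_zero.1 hk
      subst hk0
      rw [ArcAux.arcCount_zero_zero]
      exact hT00.symm
    | succ n ih =>
      intro k hk
      rcases Nat.eq_zero_or_pos k with rfl | hkpos
      · rw [ArcAux.arcCount_pos_zero (by omega), Nat.sub_zero, hTnn (n + 1) (by omega)]
      · rw [ArcAux.arcCount_rec (by omega) hkpos]
        simp only [Nat.add_sub_cancel]
        rw [Finset.sum_congr rfl (fun j hj => ih j (Finset.mem_Icc.1 hj).2)]
        rw [TS (n + 1) (by omega) (n + 1 - k) (by omega)]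
        simp only [Nat.add_sub_cancel]
        refine Finset.sum_nbij' (i := fun j => n - j) (j := fun m => n - m) ?_ ?_ ?_ ?_ ?_
        · intro j hj
          rw [Finset.mem_Icc] at hj
          show n - j ∈ Finset.range (n + 1 - k + 1)
          rw [Finset.mem_range]
          omega
        · intro m hm
          rw [Finset.mem_range] at hm
          show n - m ∈ Finset.Icc (k - 1) n
          rw [Finset.mem_Icc]
          omega
        · intro j hj
          rw [Finset.mem_Icc] at hj
          show n - (n - j) = j
          omega
        · intro m hm
          rw [Finset.mem_range] at hm
          show n - (n - m) = m
          omega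
        · intro j _
          rfl
  intro n k
  exact ⟨part1 n k, fun hn hk => ArcAux.arcCount_rec hn hk⟩
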